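/- For any integers n ≥ q ≥ m ≥ 3, there exists a connected m-hypergraph H of size n such that (I(H)^∨)^2 has an associated prime of height q. -/

import Mathlib

open MvPolynomial Finset

noncomputable section

/-- A `k`-cover of a hypergraph with edge set `E`: a nonzero tuple whose entries
sum to at least `k` over every edge. -/
def IsCover {V : Type*} (E : Finset (Finset V)) (k : ℕ) (a : V → ℕ) : Prop :=
  a ≠ 0 ∧ ∀ e ∈ E, k ≤ ∑ i ∈ e, a i

/-- `a` is a sum of two 1-covers. -/
def SumTwoOneCovers {V : Type*} (E : Finset (Finset V)) (a : V → ℕ) : Prop :=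
  ∃ b c : V → ℕ, IsCover E 1 b ∧ IsCover E 1 c ∧ a = b + c

/-- An independent set: no edge is contained in `S`. -/
def IsIndep {V : Type*} (E : Finset (Finset V)) (S : Finset V) : Prop :=
  ∀ e ∈ E, ¬ e ⊆ S

/-- `i` is in the neighborhood of `S`: `i ∉ S` and some edge consists of `i`
together with vertices of `S`. -/
def InNbhd {V : Type*} (E : Finset (Finset V)) (S : Finset V) (i : V) : Prop :=
  i ∉ S ∧ ∃ e ∈ E, i ∈ e ∧ ∀ j ∈ e, j ≠ i → j ∈ S

open Classical in
/-- The 2-cover `A_S` attached to an independent set `S`: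
`0` on `S`, `2` on `N(S)`, and `1` elsewhere. -/
noncomputable def indepCover {V : Type*} (E : Finset (Finset V)) (S : Finset V) : V → ℕ :=
  fun i => if i ∈ S then 0 else if InNbhd E S i then 2 else 1

/-- The Alexander dual of the edge ideal: `⋂_{edges e} (x_i : i ∈ e)`. -/
noncomputable def dualIdeal {V : Type*} (K : Type*) [Field K] (E : Finset (Finset V)) :
    Ideal (MvPolynomial V K) :=
  ⨅ e ∈ E, Ideal.span (X '' (e : Set V))

/-- The monomial `x_1^{a_1} ⋯ x_n^{a_n}` attached to a tuple `a`. -/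
noncomputable def coverMonomial {V : Type*} [Fintype V] (K : Type*) [Field K] (a : V → ℕ) :
    MvPolynomial V K :=
  ∏ i, X i ^ a i

/-- Connectedness of a hypergraph: any two vertices are linked by a chain of
vertices in which consecutive vertices share an edge. -/
def HConnected {V : Type*} (E : Finset (Finset V)) : Prop :=
  ∀ x y : V, ∃ l : List V, l.head? = some x ∧ l.getLast? = some y ∧
    l.Chain' fun a b => ∃ e ∈ E, a ∈ e ∧ b ∈ e

/-- The cyclic 3-hypergraph with edges `{x_1,x_2,x_3}, {x_3,x_4,x_5}, …`
(0-based: `{2j, 2j+1, 2j+2}` modulo `n`). -/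
def cyc3 (n : ℕ) (hn : 0 < n) : Finset (Finset (Fin n)) :=
  (Finset.range ((n + 1) / 2)).image fun j =>
    ({⟨(2 * j) % n, Nat.mod_lt _ hn⟩, ⟨(2 * j + 1) % n, Nat.mod_lt _ hn⟩,
      ⟨(2 * j + 2) % n, Nat.mod_lt _ hn⟩} : Finset (Fin n))

/-- The alternating tuple: `1` on odd vertices `x_1, x_3, …` (0-based even
indices), `0` on even vertices. -/
def altCover (n : ℕ) : Fin n → ℕ :=
  fun i => if (i : ℕ) % 2 = 0 then 1 else 0


set_option linter.unusedSectionVars false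
set_option linter.unusedVariables false
set_option maxHeartbeats 1000000

open Pointwise

namespace St19


variable {V : Type*} {K : Type*} [Field K]

/-- the set of exponent vectors that are covers -/
def CovSet (E : Finset (Finset V)) : Set (V →₀ ℕ) := {d | ∀ e ∈ E, ∃ i ∈ e, d i ≠ 0}

lemma mem_dualIdeal {E : Finset (Finset V)} {x : MvPolynomial V K} :
    x ∈ dualIdeal K E ↔ ∀ e ∈ E, x ∈ Ideal.span (X '' (e : Set V)) := by
  simp [dualIdeal, Ideal.mem_iInf]

lemma monomial_mem_span_X_image {e : Finset V} {d : V →₀ ℕ} (h : ∃ i ∈ e, d i ≠ 0) :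
    (monomial d (1:K)) ∈ Ideal.span (X '' (e : Set V)) := by
  classical
  rw [mem_ideal_span_X_image]
  intro mm hm
  rw [support_monomial, if_neg (one_ne_zero)] at hm
  simp only [Finset.mem_singleton] at hm
  subst hm
  obtain ⟨i, hi, hdi⟩ := h
  exact ⟨i, hi, hdi⟩

lemma monomial_mem_dualIdeal {E : Finset (Finset V)} {d : V →₀ ℕ} (h : d ∈ CovSet E) :
    (monomial d (1:K)) ∈ dualIdeal K E := by
  rw [mem_dualIdeal]
  intro e he
  exact monomial_mem_span_X_image (h e he)

lemma dualIdeal_eq_span (E : Finset (Finset V)) :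
    dualIdeal K E = Ideal.span ((fun d => monomial d (1:K)) '' CovSet E) := by
  apply le_antisymm
  · intro x hx
    rw [mem_ideal_span_monomial_image]
    intro d hd
    refine ⟨d, ?_, le_refl d⟩
    intro e he
    rw [mem_dualIdeal] at hx
    have := (mem_ideal_span_X_image).mp (hx e he) d hd
    exact this
  · rw [Ideal.span_le]
    rintro y ⟨d, hd, rfl⟩
    exact monomial_mem_dualIdeal hd

lemma mem_dualIdeal_sq {E : Finset (Finset V)} {x : MvPolynomial V K} :
    x ∈ (dualIdeal K E)^2 ↔
      ∀ d ∈ x.support, ∃ b ∈ CovSet E, ∃ c ∈ CovSet E, b + c ≤ d := by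
  have h2 : (dualIdeal K E)^2 =
      Ideal.span ((fun d => monomial d (1:K)) '' (CovSet E + CovSet E)) := by
    rw [sq, dualIdeal_eq_span, Ideal.span_mul_span']
    congr 1
    ext z
    simp only [Set.mem_mul, Set.mem_add, Set.mem_image]
    constructor
    · rintro ⟨u, ⟨b, hb, rfl⟩, v, ⟨c, hc, rfl⟩, rfl⟩
      exact ⟨b + c, ⟨b, hb, c, hc, rfl⟩, by rw [monomial_mul, one_mul]⟩
    · rintro ⟨w, ⟨b, hb, c, hc, rfl⟩, rfl⟩
      exact ⟨monomial b 1, ⟨b, hb, rfl⟩, monomial c 1, ⟨c, hc, rfl⟩,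
        by rw [monomial_mul, one_mul]⟩
  rw [h2, mem_ideal_span_monomial_image]
  constructor
  · intro h d hd
    obtain ⟨si, ⟨b, hb, c, hc, rfl⟩, hle⟩ := h d hd
    exact ⟨b, hb, c, hc, hle⟩
  · intro h d hd
    obtain ⟨b, hb, c, hc, hle⟩ := h d hd
    exact ⟨b + c, ⟨b, hb, c, hc, rfl⟩, hle⟩

lemma monomial_mem_dualIdeal_sq {E : Finset (Finset V)} {d b c : V →₀ ℕ}
    (hb : b ∈ CovSet E) (hc : c ∈ CovSet E) (hle : b + c ≤ d) :
    (monomial d (1:K)) ∈ (dualIdeal K E)^2 := by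
  classical
  rw [mem_dualIdeal_sq]
  intro d' hd'
  rw [support_monomial, if_neg one_ne_zero, Finset.mem_singleton] at hd'
  subst hd'
  exact ⟨b, hb, c, hc, hle⟩



variable {V : Type*} {K : Type*} [Field K]

open Classical in
private noncomputable def killS (s : Set V) : MvPolynomial V K →ₐ[K] MvPolynomial V K :=
  aeval (fun i => if i ∈ s then 0 else X i)

open Classical in
lemma coeff_killS (s : Set V) (x : MvPolynomial V K) {d : V →₀ ℕ}
    (hd : ∀ i ∈ s, d i = 0) : coeff d (killS s x) = coeff d x := by
  conv_lhs => rw [x.as_sum]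
  rw [map_sum, coeff_sum]
  conv_rhs => rw [x.as_sum, coeff_sum]
  apply Finset.sum_congr rfl
  intro d' _
  rw [killS, aeval_monomial]
  by_cases hcase : ∃ i ∈ d'.support, i ∈ s
  · obtain ⟨i0, hi0s, hi0⟩ := hcase
    have hz : (d'.prod fun i k => (if i ∈ s then 0 else X i : MvPolynomial V K) ^ k) = 0 := by
      apply Finset.prod_eq_zero hi0s
      show (if i0 ∈ s then 0 else X i0 : MvPolynomial V K) ^ (d' i0) = 0
      rw [if_pos hi0, zero_pow]
      exact Finsupp.mem_support_iff.mp hi0s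
    rw [hz, mul_zero, coeff_zero, coeff_monomial]
    rcases eq_or_ne d' d with rfl | hne
    · exact absurd (hd i0 hi0) (Finsupp.mem_support_iff.mp hi0s)
    · rw [if_neg hne]
  · push_neg at hcase
    have hp : (d'.prod fun i k => (if i ∈ s then 0 else X i : MvPolynomial V K) ^ k)
        = d'.prod fun i k => (X i : MvPolynomial V K) ^ k := by
      apply Finsupp.prod_congr
      intro i hi
      rw [if_neg (hcase i hi)]
    rw [hp, algebraMap_eq, ← monomial_eq]

lemma ne_zero_killS {s : Set V} {x : MvPolynomial V K}
    (hx : x ∉ Ideal.span (X '' s)) : killS s x ≠ 0 := by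
  rw [mem_ideal_span_X_image] at hx
  push_neg at hx
  obtain ⟨d, hd, hdi⟩ := hx
  have : coeff d (killS s x) = coeff d x := coeff_killS s x hdi
  intro h0
  rw [h0, coeff_zero] at this
  exact (mem_support_iff.mp hd) this.symm

open Classical in
lemma span_X_mem_ker (s : Set V) :
    Ideal.span (X '' s) ≤ RingHom.ker (killS (K := K) s).toRingHom := by
  rw [Ideal.span_le]
  rintro y ⟨i, his, rfl⟩
  simp only [SetLike.mem_coe, RingHom.mem_ker, AlgHom.toRingHom_eq_coe, RingHom.coe_coe]
  rw [killS, aeval_X, if_pos his]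

theorem isPrime_span_X_image (s : Set V) :
    (Ideal.span (X '' s) : Ideal (MvPolynomial V K)).IsPrime := by
  constructor
  · intro htop
    have h1 : (1 : MvPolynomial V K) ∈ Ideal.span (X '' s) := htop ▸ Submodule.mem_top
    rw [mem_ideal_span_X_image] at h1
    have := h1 0 (by simp)
    simp at this
  · intro f g hfg
    by_contra hcon
    push_neg at hcon
    obtain ⟨hf, hg⟩ := hcon
    have h1 := ne_zero_killS hf
    have h2 := ne_zero_killS hg
    have h3 : killS (K := K) s (f * g) = 0 := span_X_mem_ker s hfg
    rw [map_mul] at h3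
    exact mul_ne_zero h1 h2 h3




/-- alternating set starting at `r`: `r, r+2, …, r+2k` mod `c` -/
def MA (c r x : ℕ) : Prop := ∃ t, t ≤ c/2 ∧ x % c = (r + 2*t) % c
/-- alternating set `r+2, r+4, …, r+2k` mod `c` -/
def MP (c r x : ℕ) : Prop := ∃ t, 1 ≤ t ∧ t ≤ c/2 ∧ x % c = (r + 2*t) % c
/-- the set `{r} ∪ {r+1, r+3, …, r+2k-1}` mod `c` -/
def MQ (c r x : ℕ) : Prop := x % c = r % c ∨ ∃ s, s + 1 ≤ c/2 ∧ x % c = (r + 1 + 2*s) % c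

lemma MA_cover {c : ℕ} (hodd : c % 2 = 1) (r x : ℕ) : MA c r x ∨ MA c r (x + 1) := by
  have hc : 0 < c := by omega
  set d := (x + (c - 1) * r) % c with hd
  have hdc : d < c := Nat.mod_lt _ hc
  have key : (r + d) % c = x % c := by
    have h1 : (r + d) % c = (r + (x + (c - 1) * r)) % c := by
      rw [hd, Nat.add_mod_mod]
    have h2 : r + (x + (c - 1) * r) = x + c * r := by
      have : r + (c - 1) * r = c * r := by
        rcases c with _ | c'
        · omega
        · simp [Nat.succ_sub_one]; ring
      omega
    rw [h1, h2, Nat.add_mul_mod_self_left]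
  rcases Nat.mod_two_eq_zero_or_one d with hpar | hpar
  · left
    refine ⟨d / 2, by omega, ?_⟩
    have h2 : 2 * (d / 2) = d := by omega
    rw [h2, key]
  · right
    refine ⟨(d + 1) / 2, by omega, ?_⟩
    have h2 : 2 * ((d + 1) / 2) = d + 1 := by omega
    have h3 : r + (d + 1) = (r + d) + 1 := by omega
    rw [h2, h3]
    have key' : Nat.ModEq c (r + d) x := key
    exact (key'.add_right 1).symm

lemma collide {c r x t s : ℕ} (hodd : c % 2 = 1) (ht : t ≤ c/2) (hs : s ≤ c/2)
    (h1 : x % c = (r + 2*t) % c) (h2 : x % c = (r + 1 + 2*s) % c) : t = 0 ∧ s = c/2 := by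
  have hc : 0 < c := by omega
  have hme : Nat.ModEq c (r + 2*t) (r + 1 + 2*s) := h1.symm.trans h2
  rw [Nat.modEq_iff_dvd] at hme
  obtain ⟨z, hz⟩ := hme
  set k := c / 2 with hkdef
  have hcZ : (c:ℤ) = 2*(k:ℤ)+1 := by
    have : c = 2*k+1 := by omega
    exact_mod_cast this
  have hCz : (1 : ℤ) + 2*(s:ℤ) - 2*(t:ℤ) = (2*(k:ℤ)+1) * z := by
    rw [← hcZ]; push_cast at hz ⊢; linarith
  have htZ : (t:ℤ) ≤ (k:ℤ) := by exact_mod_cast ht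
  have hsZ : (s:ℤ) ≤ (k:ℤ) := by exact_mod_cast hs
  have hk0 : (0:ℤ) ≤ (k:ℤ) := by positivity
  have hz0 : 0 ≤ z := by
    by_contra h
    have h' : z ≤ -1 := by omega
    nlinarith
  have hz1 : z ≤ 1 := by
    by_contra h
    have h' : 2 ≤ z := by omega
    nlinarith
  interval_cases z
  · omega
  · constructor <;> omega

lemma collide0 {c r x t : ℕ} (hodd : c % 2 = 1) (ht1 : 1 ≤ t) (ht : t ≤ c/2)
    (h1 : x % c = (r + 2*t) % c) (h2 : x % c = r % c) : False := by
  have hc : 0 < c := by omega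
  have hme : Nat.ModEq c (r + 2*t) (r + 0) := by
    have : Nat.ModEq c (r + 2*t) r := h1.symm.trans h2
    simpa using this
  have h2t : Nat.ModEq c (2*t) 0 := (Nat.ModEq.add_left_cancel' r) hme
  have hdvd : c ∣ 2*t := (Nat.modEq_zero_iff_dvd).mp h2t
  have := Nat.le_of_dvd (by omega) hdvd
  omega

lemma MP_cover {c r x : ℕ} (hodd : c % 2 = 1) (hx : x % c ≠ r % c) :
    MP c r x ∨ MP c r (x + 1) := by
  have hc : 0 < c := by omega
  rcases MA_cover hodd r x with ⟨t, ht, hxt⟩ | ⟨t, ht, hxt⟩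
  · rcases Nat.eq_zero_or_pos t with rfl | htpos
    · simp at hxt
      exact absurd hxt hx
    · exact Or.inl ⟨t, htpos, ht, hxt⟩
  · rcases Nat.eq_zero_or_pos t with rfl | htpos
    · -- x + 1 ≡ r, so x ≡ r + 2k, with k ≥ 1
      simp only [Nat.mul_zero, Nat.add_zero] at hxt
      have hk1 : 1 ≤ c / 2 := by
        rcases Nat.eq_zero_or_pos (c / 2) with h0 | h1
        · exfalso
          have hco : c = 1 := by omega
          subst hco
          omega
        · exact h1
      left
      refine ⟨c/2, hk1, le_refl _, ?_⟩
      have hxc : (x + c) % c = x % c := Nat.add_mod_right x c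
      have hstep : x + c = (x + 1) + 2 * (c/2) := by omega
      have key : Nat.ModEq c (x + 1) r := hxt
      have := key.add_right (2 * (c/2))
      calc x % c = (x + c) % c := hxc.symm
        _ = ((x+1) + 2*(c/2)) % c := by rw [hstep]
        _ = (r + 2*(c/2)) % c := this
    · exact Or.inr ⟨t, htpos, ht, hxt⟩

lemma MQ_cover {c : ℕ} (hodd : c % 2 = 1) (r x : ℕ) : MQ c r x ∨ MQ c r (x + 1) := by
  have hc : 0 < c := by omega
  have main : ∀ y, MA c (r+1) y → MQ c r y := by
    intro y ⟨t, ht, hyt⟩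
    rcases Nat.lt_or_ge t (c/2) with hlt | hge
    · right
      exact ⟨t, by omega, hyt⟩
    · left
      have htk : t = c/2 := le_antisymm ht hge
      subst htk
      have hstep : r + 1 + 2 * (c/2) = r + c := by omega
      rw [hyt, hstep, Nat.add_mod_right]
  rcases MA_cover hodd (r+1) x with h | h
  · exact Or.inl (main _ h)
  · exact Or.inr (main _ h)

lemma cover_card {c : ℕ} (hodd : c % 2 = 1) (B : Finset ℕ) (hB : B ⊆ range c)
    (hcov : ∀ x < c, x ∈ B ∨ (x+1) % c ∈ B) : c < 2 * B.card := by
  have hc : 0 < c := by omega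
  have hinj : ∀ x ∈ range c \ B, ∀ y ∈ range c \ B,
      (x+1) % c = (y+1) % c → x = y := by
    intro x hx y hy hxy
    simp only [mem_sdiff, mem_range] at hx hy
    have h1 : Nat.ModEq c (x+1) (y+1) := hxy
    have h2 : Nat.ModEq c x y := (Nat.ModEq.add_right_cancel' 1 h1)
    have := h2
    unfold Nat.ModEq at this
    rw [Nat.mod_eq_of_lt hx.1, Nat.mod_eq_of_lt hy.1] at this
    exact this
  have hmaps : ∀ x ∈ range c \ B, (x+1) % c ∈ B := by
    intro x hx
    simp only [mem_sdiff, mem_range] at hx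
    rcases hcov x hx.1 with h | h
    · exact absurd h hx.2
    · exact h
  have hcard : (range c \ B).card ≤ B.card :=
    Finset.card_le_card_of_injOn (fun x => (x+1) % c) hmaps hinj
  have h1 : (range c \ B).card = c - B.card := by
    rw [Finset.card_sdiff_of_subset hB, card_range]
  have h2 : B.card ≤ c := by
    have := Finset.card_le_card hB
    rwa [card_range] at this
  -- parity: c odd so c ≠ 2 * B.card
  omega




/-- cycle length -/
def cc (q m : ℕ) : ℕ := q - m + 1 + (q - m) % 2
/-- number of filler vertices -/
def ff (q m : ℕ) : ℕ := q - cc q m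
/-- number of fillers per edge -/
def pz (q m : ℕ) : ℕ := if q ≤ m then m - 1 else m - 2

section Arith
variable {q m : ℕ} (h3 : 3 ≤ m) (hmq : m ≤ q)
include h3 hmq

lemma cc_odd : cc q m % 2 = 1 := by unfold cc; omega
lemma cc_pos : 0 < cc q m := by unfold cc; omega
lemma cc_lt_q : cc q m < q := by unfold cc; omega
lemma pz_pos : 0 < pz q m := by unfold pz; split <;> omega
lemma pz_le_ff : pz q m ≤ ff q m := by unfold pz ff cc; split <;> omega
lemma cc_add_ff : cc q m + ff q m = q := by unfold ff; have := cc_lt_q h3 hmq; omega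
lemma ff_le_cc_mul_pz : ff q m ≤ cc q m * pz q m := by
  rcases eq_or_lt_of_le hmq with rfl | hlt
  · have h1 : cc m m = 1 := by unfold cc; omega
    have h2 : pz m m = m - 1 := by unfold pz; simp
    have h3' : ff m m = m - 1 := by unfold ff; rw [h1]
    rw [h1, h2, h3', one_mul]
  · have hcc : 3 ≤ cc q m := by unfold cc; omega
    have hffm : ff q m ≤ m - 1 := by unfold ff cc; omega
    have hpz : pz q m = m - 2 := by unfold pz; rw [if_neg (by omega)]
    calc ff q m ≤ m - 1 := hffm
      _ ≤ 3 * (m - 2) := by omega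
      _ ≤ cc q m * pz q m := by rw [hpz]; exact Nat.mul_le_mul_right _ hcc
lemma cc_eq_one_of_q_eq_m (h : q = m) : cc q m = 1 := by unfold cc; omega

end Arith

section Construction

variable (n q m : ℕ)

def iv (hn : 0 < n) (t : ℕ) : Fin n := ⟨t % n, Nat.mod_lt _ hn⟩

/-- the natural-number version of the `j`-th cycle edge -/
def natEdge (j : ℕ) : Finset ℕ :=
  ({j, (j+1) % cc q m} : Finset ℕ) ∪
    (range (pz q m)).image (fun r => cc q m + (j * pz q m + r) % ff q m)

def cycEdge (hn : 0 < n) (j : ℕ) : Finset (Fin n) := (natEdge q m j).image (iv n hn)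

def pathEdge (hn : 0 < n) (t : ℕ) : Finset (Fin n) :=
  (Finset.Icc (t+1-m) t).image (iv n hn)

def EE (hn : 0 < n) : Finset (Finset (Fin n)) :=
  ((range (cc q m)).image (cycEdge n q m hn)) ∪ ((Finset.Ico q n).image (pathEdge n m hn))

def Af : Fin n → ℕ := fun i => if i.val < cc q m then 1 else if i.val < q then 0 else 2

end Construction

section Lemmas

variable {n q m : ℕ} (h3 : 3 ≤ m) (hmq : m ≤ q) (hqn : q ≤ n) (hn : 0 < n)

lemma iv_val {t : ℕ} (ht : t < n) : (iv n hn t).val = t := Nat.mod_eq_of_lt ht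

include h3 hmq in
lemma natEdge_subset {j x : ℕ} (hj : j < cc q m) (hx : x ∈ natEdge q m j) : x < q := by
  have h1 := cc_lt_q h3 hmq
  have h2 := cc_add_ff h3 hmq
  have hffpos : 0 < ff q m := lt_of_lt_of_le (pz_pos h3 hmq) (pz_le_ff h3 hmq)
  unfold natEdge at hx
  simp only [Finset.mem_union, Finset.mem_insert, Finset.mem_singleton, Finset.mem_image,
    Finset.mem_range] at hx
  rcases hx with (rfl | rfl) | ⟨r, hr, rfl⟩
  · omega
  · have := Nat.mod_lt (j+1) (cc_pos h3 hmq)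
    omega
  · have := Nat.mod_lt (j * pz q m + r) hffpos
    omega

include h3 hmq hqn in
lemma card_natEdge {j : ℕ} (hj : j < cc q m) : (natEdge q m j).card = m := by
  have hffpos : 0 < ff q m := lt_of_lt_of_le (pz_pos h3 hmq) (pz_le_ff h3 hmq)
  have hpf := pz_le_ff h3 hmq
  unfold natEdge
  rw [Finset.card_union_of_disjoint, Finset.card_image_of_injOn]
  · -- card pair + pz = m
    have hcardim : (range (pz q m)).card = pz q m := card_range _
    rw [hcardim]
    by_cases hqm : q = m
    · -- q = m : cc = 1, pair is {0}
      have h1 : cc q m = 1 := cc_eq_one_of_q_eq_m h3 hmq hqm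
      have hj0 : j = 0 := by omega
      subst hj0
      rw [h1]
      have hpair : ({0, (0+1) % 1} : Finset ℕ) = {0} := by decide
      rw [hpair, Finset.card_singleton]
      have hpz : pz q m = m - 1 := by unfold pz; rw [if_pos (by omega)]
      omega
    · have hlt : m < q := by omega
      have hcc2 : 2 ≤ cc q m := by
        have := cc_odd h3 hmq
        rcases Nat.lt_or_ge (cc q m) 2 with h | h
        · exfalso
          have h1 : cc q m = 1 := by have := cc_pos h3 hmq; omega
          unfold cc at h1; omega
        · exact h
      have hne : j ≠ (j+1) % cc q m := by
        intro h
        have hme : Nat.ModEq (cc q m) j (j+1) := by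
          show j % cc q m = (j+1) % cc q m
          rw [Nat.mod_eq_of_lt hj]
          exact h
        have hd := (Nat.modEq_iff_dvd' (by omega)).mp hme
        have := Nat.le_of_dvd (by omega) hd
        omega
      rw [Finset.card_insert_of_notMem (by simpa using hne), Finset.card_singleton]
      unfold pz
      rw [if_neg (by omega)]
      omega
  · -- injectivity of filler map
    intro r1 h1 r2 h2 heq
    simp only [Finset.coe_range, Set.mem_Iio] at h1 h2
    have heq' : cc q m + (j * pz q m + r1) % ff q m = cc q m + (j * pz q m + r2) % ff q m := heq
    have heq2 : (j * pz q m + r1) % ff q m = (j * pz q m + r2) % ff q m := by omega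
    have hme : Nat.ModEq (ff q m) (j * pz q m + r1) (j * pz q m + r2) := heq2
    have hr : Nat.ModEq (ff q m) r1 r2 := Nat.ModEq.add_left_cancel' _ hme
    unfold Nat.ModEq at hr
    rwa [Nat.mod_eq_of_lt (by omega), Nat.mod_eq_of_lt (by omega)] at hr
  · -- disjointness pair vs fillers
    rw [Finset.disjoint_left]
    intro x hx hx2
    simp only [Finset.mem_insert, Finset.mem_singleton] at hx
    simp only [Finset.mem_image, Finset.mem_range] at hx2
    obtain ⟨r, hr, rfl⟩ := hx2
    have h2 := Nat.mod_lt (j + 1) (cc_pos h3 hmq)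
    rcases hx with h | h <;> omega

include h3 hmq hqn in
lemma card_cycEdge {j : ℕ} (hj : j < cc q m) : (cycEdge n q m hn j).card = m := by
  unfold cycEdge
  rw [Finset.card_image_of_injOn, card_natEdge h3 hmq hqn hj]
  intro x hx y hy hxy
  have hx' : x < q := natEdge_subset h3 hmq hj hx
  have hy' : y < q := natEdge_subset h3 hmq hj hy
  have := congrArg Fin.val hxy
  rwa [iv_val hn (by omega), iv_val hn (by omega)] at this

include h3 in
lemma card_pathEdge {t : ℕ} (ht : q ≤ t) (htn : t < n) (hq : m ≤ q) : (pathEdge n m hn t).card = m := by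
  unfold pathEdge
  rw [Finset.card_image_of_injOn, Nat.card_Icc]
  · omega
  · intro x hx y hy hxy
    simp only [Finset.coe_Icc, Set.mem_Icc] at hx hy
    have := congrArg Fin.val hxy
    rwa [iv_val hn (by omega), iv_val hn (by omega)] at this

include h3 hmq hqn in
lemma card_EE : ∀ e ∈ EE n q m hn, e.card = m := by
  intro e he
  unfold EE at he
  simp only [Finset.mem_union, Finset.mem_image, Finset.mem_range, Finset.mem_Ico] at he
  rcases he with ⟨j, hj, rfl⟩ | ⟨t, ⟨ht1, ht2⟩, rfl⟩
  · exact card_cycEdge h3 hmq hqn hn hj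
  · exact card_pathEdge h3 hn ht1 ht2 hmq

end Lemmas

open scoped Classical

section Covers

variable (n q m : ℕ)

/-- cover predicate for functions -/
def CovP (E : Finset (Finset (Fin n))) (g : Fin n → ℕ) : Prop :=
  ∀ e ∈ E, ∃ i ∈ e, g i ≠ 0

noncomputable def GA (r : ℕ) : Fin n → ℕ := fun i =>
  if q ≤ i.val then 1 else if i.val < cc q m ∧ MA (cc q m) r i.val then 1 else 0

noncomputable def GP (u r : ℕ) : Fin n → ℕ := fun i =>
  if q ≤ i.val then 1 else if i.val = u then 1
    else if i.val < cc q m ∧ MP (cc q m) r i.val then 1 else 0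

noncomputable def GQ (r : ℕ) : Fin n → ℕ := fun i =>
  if q ≤ i.val then 1 else if i.val < cc q m ∧ MQ (cc q m) r i.val then 1 else 0

end Covers

section CoverLemmas

variable {n q m : ℕ} (h3 : 3 ≤ m) (hmq : m ≤ q) (hqn : q ≤ n) (hn : 0 < n)

lemma MA_mod (c r x : ℕ) : MA c r (x % c) ↔ MA c r x := by
  unfold MA; rw [Nat.mod_mod_of_dvd _ (dvd_refl _)]

lemma MP_mod (c r x : ℕ) : MP c r (x % c) ↔ MP c r x := by
  unfold MP; rw [Nat.mod_mod_of_dvd _ (dvd_refl _)]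

lemma MQ_mod (c r x : ℕ) : MQ c r (x % c) ↔ MQ c r x := by
  unfold MQ; rw [Nat.mod_mod_of_dvd _ (dvd_refl _)]

include h3 hmq hqn in
lemma mem_EE_cyc {j : ℕ} (hj : j < cc q m) : cycEdge n q m hn j ∈ EE n q m hn := by
  unfold EE
  exact Finset.mem_union_left _ (Finset.mem_image_of_mem _ (mem_range.mpr hj))

lemma mem_EE_path {t : ℕ} (ht : q ≤ t) (htn : t < n) : pathEdge n m hn t ∈ EE n q m hn := by
  unfold EE
  exact Finset.mem_union_right _ (Finset.mem_image_of_mem _ (mem_Ico.mpr ⟨ht, htn⟩))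

include h3 hmq hqn in
lemma EE_cases {e : Finset (Fin n)} (he : e ∈ EE n q m hn) :
    (∃ j < cc q m, e = cycEdge n q m hn j) ∨ (∃ t, q ≤ t ∧ t < n ∧ e = pathEdge n m hn t) := by
  unfold EE at he
  simp only [Finset.mem_union, Finset.mem_image, Finset.mem_range, Finset.mem_Ico] at he
  rcases he with ⟨j, hj, rfl⟩ | ⟨t, ⟨ht1, ht2⟩, rfl⟩
  · exact Or.inl ⟨j, hj, rfl⟩
  · exact Or.inr ⟨t, ht1, ht2, rfl⟩

lemma mem_natEdge_self {j : ℕ} : j ∈ natEdge q m j := by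
  unfold natEdge; simp

lemma mem_natEdge_succ {j : ℕ} : (j+1) % cc q m ∈ natEdge q m j := by
  unfold natEdge; simp

lemma mem_natEdge_filler {j r : ℕ} (hr : r < pz q m) :
    cc q m + (j * pz q m + r) % ff q m ∈ natEdge q m j := by
  unfold natEdge
  apply Finset.mem_union_right
  exact Finset.mem_image_of_mem _ (mem_range.mpr hr)

include h3 hmq hqn in
lemma path_vertex_one {g : Fin n → ℕ} (hg : ∀ i : Fin n, q ≤ i.val → g i = 1)
    {t : ℕ} (ht : q ≤ t) (htn : t < n) : ∃ i ∈ pathEdge n m hn t, g i ≠ 0 := by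
  refine ⟨iv n hn t, ?_, ?_⟩
  · unfold pathEdge
    apply Finset.mem_image_of_mem
    rw [Finset.mem_Icc]
    omega
  · rw [hg _ (by rw [iv_val hn htn]; exact ht)]
    omega

include h3 hmq hqn in
lemma covP_GA (r : ℕ) : CovP n (EE n q m hn) (GA n q m r) := by
  intro e he
  have hodd := cc_odd h3 hmq
  have hcq := cc_lt_q h3 hmq
  rcases EE_cases h3 hmq hqn hn he with ⟨j, hj, rfl⟩ | ⟨t, ht, htn, rfl⟩
  · rcases MA_cover hodd r j with h | h
    · refine ⟨iv n hn j, Finset.mem_image_of_mem _ mem_natEdge_self, ?_⟩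
      unfold GA
      rw [iv_val hn (by omega)]
      rw [if_neg (by omega), if_pos ⟨hj, h⟩]
      omega
    · refine ⟨iv n hn ((j+1) % cc q m), Finset.mem_image_of_mem _ mem_natEdge_succ, ?_⟩
      have hlt : (j+1) % cc q m < cc q m := Nat.mod_lt _ (cc_pos h3 hmq)
      unfold GA
      rw [iv_val hn (by omega)]
      rw [if_neg (by omega), if_pos ⟨hlt, (MA_mod _ r _).mpr h⟩]
      omega
  · exact path_vertex_one h3 hmq hqn hn (fun i hi => by unfold GA; rw [if_pos hi]) ht htn

include h3 hmq hqn in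
lemma covP_GQ (r : ℕ) : CovP n (EE n q m hn) (GQ n q m r) := by
  intro e he
  have hodd := cc_odd h3 hmq
  have hcq := cc_lt_q h3 hmq
  rcases EE_cases h3 hmq hqn hn he with ⟨j, hj, rfl⟩ | ⟨t, ht, htn, rfl⟩
  · rcases MQ_cover hodd r j with h | h
    · refine ⟨iv n hn j, Finset.mem_image_of_mem _ mem_natEdge_self, ?_⟩
      unfold GQ
      rw [iv_val hn (by omega)]
      rw [if_neg (by omega), if_pos ⟨hj, h⟩]
      omega
    · refine ⟨iv n hn ((j+1) % cc q m), Finset.mem_image_of_mem _ mem_natEdge_succ, ?_⟩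
      have hlt : (j+1) % cc q m < cc q m := Nat.mod_lt _ (cc_pos h3 hmq)
      unfold GQ
      rw [iv_val hn (by omega)]
      rw [if_neg (by omega), if_pos ⟨hlt, (MQ_mod _ r _).mpr h⟩]
      omega
  · exact path_vertex_one h3 hmq hqn hn (fun i hi => by unfold GQ; rw [if_pos hi]) ht htn

include h3 hmq hqn in
lemma covP_GP {u js : ℕ} (hjs : js < cc q m) (hu1 : cc q m ≤ u) (hu2 : u < q)
    (humem : u ∈ natEdge q m js) : CovP n (EE n q m hn) (GP n q m u js) := by
  intro e he
  have hodd := cc_odd h3 hmq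
  have hcq := cc_lt_q h3 hmq
  rcases EE_cases h3 hmq hqn hn he with ⟨j, hj, rfl⟩ | ⟨t, ht, htn, rfl⟩
  · by_cases hjj : j = js
    · subst hjj
      refine ⟨iv n hn u, Finset.mem_image_of_mem _ humem, ?_⟩
      unfold GP
      rw [iv_val hn (by omega)]
      rw [if_neg (by omega), if_pos rfl]
      omega
    · have hne : j % cc q m ≠ js % cc q m := by
        rw [Nat.mod_eq_of_lt hj, Nat.mod_eq_of_lt hjs]
        exact hjj
      rcases MP_cover hodd hne with h | h
      · refine ⟨iv n hn j, Finset.mem_image_of_mem _ mem_natEdge_self, ?_⟩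
        unfold GP
        rw [iv_val hn (by omega)]
        rw [if_neg (by omega), if_neg (by omega), if_pos ⟨hj, h⟩]
        omega
      · refine ⟨iv n hn ((j+1) % cc q m), Finset.mem_image_of_mem _ mem_natEdge_succ, ?_⟩
        have hlt : (j+1) % cc q m < cc q m := Nat.mod_lt _ (cc_pos h3 hmq)
        unfold GP
        rw [iv_val hn (by omega)]
        rw [if_neg (by omega), if_neg (by omega), if_pos ⟨hlt, (MP_mod _ js _).mpr h⟩]
        omega
  · exact path_vertex_one h3 hmq hqn hn (fun i hi => by unfold GP; rw [if_pos hi]) ht htn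


include h3 hmq in
lemma GA_le_Af (r : ℕ) (i : Fin n) : GA n q m r i ≤ Af n q m i := by
  have hcq := cc_lt_q h3 hmq
  unfold GA Af
  split_ifs <;> omega

include h3 hmq in
lemma GQ_le_Af (r : ℕ) (i : Fin n) : GQ n q m r i ≤ Af n q m i := by
  have hcq := cc_lt_q h3 hmq
  unfold GQ Af
  split_ifs <;> omega

include h3 hmq hqn in
lemma bound_A {j : ℕ} (hj : j < cc q m) (i : Fin n) :
    GA n q m j i + GA n q m (j+1) i ≤ Af n q m i + (if i = iv n hn j then 1 else 0) := by
  have hodd := cc_odd h3 hmq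
  have hcq := cc_lt_q h3 hmq
  by_cases h1 : GA n q m j i = 0
  · have := GA_le_Af h3 hmq (j+1) i
    omega
  by_cases h2 : GA n q m (j+1) i = 0
  · have := GA_le_Af h3 hmq j i
    omega
  -- both are 1
  have hv1 : GA n q m j i ≤ 1 := by unfold GA; split_ifs <;> omega
  have hv2 : GA n q m (j+1) i ≤ 1 := by unfold GA; split_ifs <;> omega
  by_cases hq : q ≤ i.val
  · have hAf : Af n q m i = 2 := by unfold Af; rw [if_neg (by omega), if_neg (by omega)]
    omega
  · -- i.val < q and both indicators nonzero forces i.val < cc and MA conditions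
    unfold GA at h1 h2
    rw [if_neg hq] at h1 h2
    by_cases hcase1 : i.val < cc q m ∧ MA (cc q m) j i.val
    · by_cases hcase2 : i.val < cc q m ∧ MA (cc q m) (j+1) i.val
      · obtain ⟨hvc, t, ht, hteq⟩ := hcase1
        obtain ⟨-, s, hs, hseq⟩ := hcase2
        have hcol := collide hodd ht hs hteq hseq
        have ht0 : t = 0 := hcol.1
        subst ht0
        have : i.val % cc q m = j % cc q m := by
          rw [hteq]
          norm_num
        rw [Nat.mod_eq_of_lt hvc, Nat.mod_eq_of_lt hj] at this
        have hieq : i = iv n hn j := by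
          apply Fin.ext
          rw [iv_val hn (by omega)]
          exact this
        rw [if_pos hieq]
        have hAf : Af n q m i = 1 := by unfold Af; rw [if_pos hvc]
        omega
      · rw [if_neg hcase2] at h2
        omega
    · rw [if_neg hcase1] at h1
      omega

include h3 hmq hqn in
lemma bound_fill {u js : ℕ} (hjs : js < cc q m) (hu1 : cc q m ≤ u) (hu2 : u < q) (i : Fin n) :
    GP n q m u js i + GQ n q m js i ≤ Af n q m i + (if i = iv n hn u then 1 else 0) := by
  have hodd := cc_odd h3 hmq
  have hcq := cc_lt_q h3 hmq
  by_cases hq : q ≤ i.val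
  · have hAf : Af n q m i = 2 := by unfold Af; rw [if_neg (by omega), if_neg (by omega)]
    have e1 : GP n q m u js i = 1 := by unfold GP; rw [if_pos hq]
    have e2 : GQ n q m js i = 1 := by unfold GQ; rw [if_pos hq]
    omega
  by_cases hiu : i.val = u
  · have hieq : i = iv n hn u := by
      apply Fin.ext
      rw [iv_val hn (by omega)]
      exact hiu
    have e1 : GP n q m u js i = 1 := by unfold GP; rw [if_neg hq, if_pos hiu]
    have e2 : GQ n q m js i = 0 := by
      unfold GQ; rw [if_neg hq, if_neg (by omega)]
    have hAf : Af n q m i = 0 := by unfold Af; rw [if_neg (by omega), if_pos (by omega)]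
    rw [if_pos hieq]
    omega
  · have e2 := GQ_le_Af h3 hmq (n := n) js i
    by_cases hvc : i.val < cc q m
    · have hAf : Af n q m i = 1 := by unfold Af; rw [if_pos hvc]
      by_cases hP : MP (cc q m) js i.val
      · -- then GQ must vanish
        have e1 : GP n q m u js i ≤ 1 := by unfold GP; split_ifs <;> omega
        have e2' : GQ n q m js i = 0 := by
          unfold GQ
          rw [if_neg hq, if_neg]
          rintro ⟨-, hMQ⟩
          obtain ⟨t, ht1, ht2, hteq⟩ := hP
          rcases hMQ with hr | ⟨s, hs, hseq⟩
          · exact collide0 hodd ht1 ht2 hteq hr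
          · have hcol := collide hodd ht2 (by omega) hteq hseq
            omega
        omega
      · have e1 : GP n q m u js i = 0 := by
          unfold GP
          rw [if_neg hq, if_neg hiu, if_neg]
          rintro ⟨-, hMP⟩
          exact hP hMP
        omega
    · have e1 : GP n q m u js i = 0 := by
        unfold GP
        rw [if_neg hq, if_neg hiu, if_neg (by tauto)]
      omega

include h3 hmq hqn in
lemma Amain {u : ℕ} (hu : u < q) :
    ∃ b c : Fin n → ℕ, CovP n (EE n q m hn) b ∧ CovP n (EE n q m hn) c ∧
      ∀ i, b i + c i ≤ Af n q m i + (if i = iv n hn u then 1 else 0) := by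
  by_cases hvc : u < cc q m
  · exact ⟨GA n q m u, GA n q m (u+1), covP_GA h3 hmq hqn hn u, covP_GA h3 hmq hqn hn (u+1),
      bound_A h3 hmq hqn hn hvc⟩
  · push_neg at hvc
    have hff : cc q m + ff q m = q := cc_add_ff h3 hmq
    have hpz := pz_pos h3 hmq
    have hfcp := ff_le_cc_mul_pz h3 hmq
    set s := u - cc q m with hs
    have hsff : s < ff q m := by omega
    set js := s / pz q m with hjs
    have hjslt : js < cc q m := by
      rw [hjs]
      rw [Nat.div_lt_iff_lt_mul hpz]
      calc s < ff q m := hsff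
        _ ≤ cc q m * pz q m := hfcp
    have humem : u ∈ natEdge q m js := by
      have h1 : js * pz q m + s % pz q m = s := by
        rw [hjs, Nat.mul_comm]
        exact Nat.div_add_mod s (pz q m)
      have h2 : cc q m + (js * pz q m + s % pz q m) % ff q m = u := by
        rw [h1, Nat.mod_eq_of_lt hsff]
        omega
      have := mem_natEdge_filler (q := q) (m := m) (j := js) (Nat.mod_lt s hpz)
      rwa [h2] at this
    exact ⟨GP n q m u js, GQ n q m js,
      covP_GP h3 hmq hqn hn hjslt hvc hu humem,
      covP_GQ h3 hmq hqn hn js,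
      bound_fill h3 hmq hqn hn hjslt hvc hu⟩

include h3 hmq hqn in
lemma Bmain {b c d : Fin n → ℕ} (hb : CovP n (EE n q m hn) b) (hc : CovP n (EE n q m hn) c)
    (hd : ∀ i : Fin n, i.val < q → d i = 0)
    (hle : ∀ i, b i + c i ≤ Af n q m i + d i) : False := by
  have hodd := cc_odd h3 hmq
  have hcq := cc_lt_q h3 hmq
  set Bs := (range (cc q m)).filter (fun j => b (iv n hn j) ≠ 0) with hBs
  set Cs := (range (cc q m)).filter (fun j => c (iv n hn j) ≠ 0) with hCs
  have main : ∀ (g : Fin n → ℕ), CovP n (EE n q m hn) g →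
      (∀ i, g i ≤ Af n q m i + d i) →
      ∀ x < cc q m, g (iv n hn x) ≠ 0 ∨ g (iv n hn ((x+1) % cc q m)) ≠ 0 := by
    intro g hg hgle x hx
    obtain ⟨i, hi, hgi⟩ := hg (cycEdge n q m hn x) (mem_EE_cyc h3 hmq hqn hn hx)
    unfold cycEdge at hi
    obtain ⟨y, hy, rfl⟩ := Finset.mem_image.mp hi
    have hyq : y < q := natEdge_subset h3 hmq hx hy
    unfold natEdge at hy
    simp only [Finset.mem_union, Finset.mem_insert, Finset.mem_singleton, Finset.mem_image,
      Finset.mem_range] at hy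
    rcases hy with (rfl | rfl) | ⟨r, hr, rfl⟩
    · exact Or.inl hgi
    · exact Or.inr hgi
    · -- filler vertex: both b and c vanish there
      exfalso
      set y := cc q m + (x * pz q m + r) % ff q m with hy2
      have hyc : cc q m ≤ y := by omega
      have hAf : Af n q m (iv n hn y) = 0 := by
        unfold Af
        rw [iv_val hn (by omega)]
        rw [if_neg (by omega), if_pos (by omega)]
      have hdz : d (iv n hn y) = 0 := hd _ (by rw [iv_val hn (by omega)]; omega)
      have := hgle (iv n hn y)
      rw [hAf, hdz] at this
      omega
  have hBcov : ∀ x < cc q m, x ∈ Bs ∨ (x+1) % cc q m ∈ Bs := by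
    intro x hx
    rcases main b hb (fun i => by have := hle i; omega) x hx with h | h
    · exact Or.inl (Finset.mem_filter.mpr ⟨mem_range.mpr hx, h⟩)
    · exact Or.inr (Finset.mem_filter.mpr ⟨mem_range.mpr (Nat.mod_lt _ (by omega)), h⟩)
  have hCcov : ∀ x < cc q m, x ∈ Cs ∨ (x+1) % cc q m ∈ Cs := by
    intro x hx
    rcases main c hc (fun i => by have := hle i; omega) x hx with h | h
    · exact Or.inl (Finset.mem_filter.mpr ⟨mem_range.mpr hx, h⟩)
    · exact Or.inr (Finset.mem_filter.mpr ⟨mem_range.mpr (Nat.mod_lt _ (by omega)), h⟩)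
  have hdisj : Disjoint Bs Cs := by
    rw [Finset.disjoint_left]
    intro j hjB hjC
    rw [Finset.mem_filter, mem_range] at hjB hjC
    have hAf : Af n q m (iv n hn j) = 1 := by
      unfold Af
      rw [iv_val hn (by omega), if_pos hjB.1]
    have hdz : d (iv n hn j) = 0 := hd _ (by rw [iv_val hn (by omega)]; omega)
    have := hle (iv n hn j)
    rw [hAf, hdz] at this
    have h1 := hjB.2
    have h2 := hjC.2
    omega
  have c1 : cc q m < 2 * Bs.card := cover_card hodd Bs (Finset.filter_subset _ _) hBcov
  have c2 : cc q m < 2 * Cs.card := cover_card hodd Cs (Finset.filter_subset _ _) hCcov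
  have c3 : Bs.card + Cs.card ≤ cc q m := by
    rw [← Finset.card_union_of_disjoint hdisj]
    calc (Bs ∪ Cs).card ≤ (range (cc q m)).card := by
          apply Finset.card_le_card
          intro x hx
          rcases Finset.mem_union.mp hx with h | h
          · exact Finset.filter_subset _ _ h
          · exact Finset.filter_subset _ _ h
      _ = cc q m := card_range _
  omega

end CoverLemmas

section Connect

variable {n q m : ℕ} (h3 : 3 ≤ m) (hmq : m ≤ q) (hqn : q ≤ n) (hn : 0 < n)

def Rel (E : Finset (Finset (Fin n))) (a b : Fin n) : Prop := ∃ e ∈ E, a ∈ e ∧ b ∈ e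

lemma Rel_symm {E : Finset (Finset (Fin n))} {a b : Fin n} (h : Rel E a b) : Rel E b a := by
  obtain ⟨e, he, h1, h2⟩ := h
  exact ⟨e, he, h2, h1⟩

include h3 hmq hqn in
lemma rel_zero : Rel (EE n q m hn) (iv n hn 0) (iv n hn 0) := by
  refine ⟨cycEdge n q m hn 0, mem_EE_cyc h3 hmq hqn hn (cc_pos h3 hmq), ?_, ?_⟩ <;>
    exact Finset.mem_image_of_mem _ mem_natEdge_self

include h3 hmq hqn in
lemma filler_js {u : ℕ} (hu1 : cc q m ≤ u) (hu2 : u < q) :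
    ∃ js < cc q m, u ∈ natEdge q m js := by
  have hff : cc q m + ff q m = q := cc_add_ff h3 hmq
  have hpz := pz_pos h3 hmq
  have hfcp := ff_le_cc_mul_pz h3 hmq
  set s := u - cc q m with hs
  have hsff : s < ff q m := by omega
  refine ⟨s / pz q m, ?_, ?_⟩
  · rw [Nat.div_lt_iff_lt_mul hpz]
    omega
  · have h1 : (s / pz q m) * pz q m + s % pz q m = s := by
      rw [Nat.mul_comm]
      exact Nat.div_add_mod s (pz q m)
    have h2 : cc q m + ((s / pz q m) * pz q m + s % pz q m) % ff q m = u := by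
      rw [h1, Nat.mod_eq_of_lt hsff]
      omega
    have := mem_natEdge_filler (q := q) (m := m) (j := s / pz q m) (Nat.mod_lt s hpz)
    rwa [h2] at this

include h3 hmq hqn in
lemma conn_step (v : Fin n) (hv : 0 < v.val) :
    ∃ w : Fin n, w.val < v.val ∧ Rel (EE n q m hn) v w := by
  have hcq := cc_lt_q h3 hmq
  rcases Nat.lt_or_ge v.val (cc q m) with hvc | hvc
  · -- cycle vertex
    refine ⟨iv n hn (v.val - 1), by rw [iv_val hn (by omega)]; omega, ?_⟩
    refine ⟨cycEdge n q m hn (v.val - 1), mem_EE_cyc h3 hmq hqn hn (by omega), ?_, ?_⟩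
    · have hmod : (v.val - 1 + 1) % cc q m = v.val := by
        rw [Nat.sub_add_cancel (by omega), Nat.mod_eq_of_lt hvc]
      refine Finset.mem_image.mpr ⟨(v.val - 1 + 1) % cc q m, mem_natEdge_succ, ?_⟩
      apply Fin.ext
      rw [iv_val hn (by rw [hmod]; omega), hmod]
    · exact Finset.mem_image_of_mem _ mem_natEdge_self
  · rcases Nat.lt_or_ge v.val q with hvq | hvq
    · -- filler vertex
      obtain ⟨js, hjs, hmem⟩ := filler_js h3 hmq hqn hvc hvq
      refine ⟨iv n hn js, by rw [iv_val hn (by omega)]; omega, ?_⟩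
      refine ⟨cycEdge n q m hn js, mem_EE_cyc h3 hmq hqn hn hjs, ?_, ?_⟩
      · refine Finset.mem_image.mpr ⟨v.val, hmem, ?_⟩
        apply Fin.ext
        rw [iv_val hn v.isLt]
      · exact Finset.mem_image_of_mem _ mem_natEdge_self
    · -- outside vertex
      refine ⟨iv n hn (v.val - 1), by rw [iv_val hn (by omega)]; omega, ?_⟩
      refine ⟨pathEdge n m hn v.val, mem_EE_path hn hvq v.isLt, ?_, ?_⟩
      · unfold pathEdge
        refine Finset.mem_image.mpr ⟨v.val, Finset.mem_Icc.mpr (by omega), ?_⟩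
        apply Fin.ext
        rw [iv_val hn v.isLt]
      · unfold pathEdge
        exact Finset.mem_image_of_mem _ (Finset.mem_Icc.mpr (by omega))

include h3 hmq hqn in
lemma conn_toZero : ∀ v : Fin n, ∃ l : List (Fin n),
    l.head? = some v ∧ l.getLast? = some (iv n hn 0) ∧ l.Chain' (Rel (EE n q m hn)) := by
  suffices H : ∀ N (v : Fin n), v.val < N → ∃ l : List (Fin n),
      l.head? = some v ∧ l.getLast? = some (iv n hn 0) ∧ l.Chain' (Rel (EE n q m hn)) by
    exact fun v => H (v.val + 1) v (Nat.lt_succ_self _)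
  intro N
  induction N with
  | zero => intro v hv; omega
  | succ N ih =>
    intro v hv
    rcases Nat.eq_zero_or_pos v.val with h0 | h0
    · have hveq : v = iv n hn 0 := by
        apply Fin.ext
        rw [iv_val hn hn, h0]
      exact ⟨[v], rfl, by rw [hveq]; rfl, List.isChain_singleton v⟩
    · obtain ⟨w, hw, hrel⟩ := conn_step h3 hmq hqn hn v h0
      obtain ⟨lw, hh, hl, hch⟩ := ih w (by omega)
      cases lw with
      | nil => simp at hh
      | cons a t =>
        have haw : a = w := by simpa using hh
        refine ⟨v :: a :: t, rfl, ?_, ?_⟩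
        · rw [List.getLast?_cons_cons]
          exact hl
        · change List.IsChain _ _; rw [List.isChain_cons]
          constructor
          · intro y hy
            simp only [List.head?_cons, Option.mem_def, Option.some.injEq] at hy
            subst hy
            rw [haw] at *
            exact hrel
          · exact hch

include h3 hmq hqn in
lemma conn_main : ∀ x y : Fin n, ∃ l : List (Fin n), l.head? = some x ∧ l.getLast? = some y ∧
    l.Chain' (Rel (EE n q m hn)) := by
  intro x y
  obtain ⟨lx, hx1, hx2, hx3⟩ := conn_toZero h3 hmq hqn hn x
  obtain ⟨ly, hy1, hy2, hy3⟩ := conn_toZero h3 hmq hqn hn y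
  have hlxne : lx ≠ [] := by intro h; rw [h] at hx1; simp at hx1
  have hlyne : ly.reverse ≠ [] := by
    intro h
    rw [List.reverse_eq_nil_iff] at h
    rw [h] at hy1; simp at hy1
  refine ⟨lx ++ ly.reverse, ?_, ?_, ?_⟩
  · rw [List.head?_append]
    cases lx with
    | nil => simp at hx1
    | cons a t => simpa using hx1
  · rw [List.getLast?_append_of_ne_nil _ hlyne, List.getLast?_reverse]
    exact hy1
  · change List.IsChain _ _; rw [List.isChain_append]
    refine ⟨hx3, ?_, ?_⟩
    · rw [List.isChain_reverse]
      apply List.IsChain.imp _ hy3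
      intro a b hab
      exact Rel_symm hab
    · intro a ha b hb
      rw [hx2] at ha
      rw [List.head?_reverse, hy2] at hb
      simp only [Option.mem_def, Option.some.injEq] at ha hb
      subst ha; subst hb
      exact rel_zero h3 hmq hqn hn
end Connect


section Main

variable {K : Type*} [Field K] {n q m : ℕ}

def SSet (n q : ℕ) (hqn : q ≤ n) : Finset (Fin n) :=
  (range q).attachFin (fun x hx => lt_of_lt_of_le (mem_range.mp hx) hqn)

lemma mem_SSet {q : ℕ} (hqn : q ≤ n) {i : Fin n} : i ∈ SSet n q hqn ↔ i.val < q := by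
  rw [SSet, Finset.mem_attachFin, mem_range]

lemma card_SSet {q : ℕ} (hqn : q ≤ n) : (SSet n q hqn).card = q := by
  rw [SSet, Finset.card_attachFin, card_range]

noncomputable def AF (n q m : ℕ) : Fin n →₀ ℕ := Finsupp.equivFunOnFinite.symm (Af n q m)

lemma AF_apply (i : Fin n) : AF n q m i = Af n q m i := rfl

variable (h3 : 3 ≤ m) (hmq : m ≤ q) (hqn : q ≤ n) (hn : 0 < n)

include h3 hmq hqn in
lemma keyA {i : Fin n} (hi : i ∈ SSet n q hqn) :
    (X i : MvPolynomial (Fin n) K) * monomial (AF n q m) 1 ∈ (dualIdeal K (EE n q m hn))^2 := by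
  classical
  have hiu : i.val < q := (mem_SSet hqn).mp hi
  obtain ⟨b, c, hb, hc, hbc⟩ := Amain h3 hmq hqn hn hiu
  set bF : Fin n →₀ ℕ := Finsupp.equivFunOnFinite.symm b with hbF
  set cF : Fin n →₀ ℕ := Finsupp.equivFunOnFinite.symm c with hcF
  have hbCov : bF ∈ CovSet (EE n q m hn) := by
    intro e he
    obtain ⟨j, hj, hjne⟩ := hb e he
    exact ⟨j, hj, hjne⟩
  have hcCov : cF ∈ CovSet (EE n q m hn) := by
    intro e he
    obtain ⟨j, hj, hjne⟩ := hc e he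
    exact ⟨j, hj, hjne⟩
  have hiv : iv n hn i.val = i := by
    apply Fin.ext
    rw [iv_val hn i.isLt]
  have hle : bF + cF ≤ AF n q m + Finsupp.single i 1 := by
    rw [Finsupp.le_def]
    intro i'
    have := hbc i'
    rw [hiv] at this
    simp only [Finsupp.add_apply, AF_apply, Finsupp.single_apply]
    calc bF i' + cF i' = b i' + c i' := rfl
      _ ≤ Af n q m i' + (if i' = i then 1 else 0) := this
      _ = Af n q m i' + (if i = i' then 1 else 0) := by
          congr 1
          by_cases h : i = i'
          · rw [if_pos h, if_pos h.symm]
          · rw [if_neg h, if_neg (fun hh => h hh.symm)]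
  set rest : Fin n →₀ ℕ := (AF n q m + Finsupp.single i 1) - (bF + cF) with hrest
  have hsum : (bF + cF) + rest = AF n q m + Finsupp.single i 1 :=
    add_tsub_cancel_of_le hle
  have hXi : (X i : MvPolynomial (Fin n) K) = monomial (Finsupp.single i 1) 1 := rfl
  rw [hXi, monomial_mul, one_mul]
  have hexp : Finsupp.single i 1 + AF n q m = (bF + cF) + rest := by
    rw [hsum, add_comm]
  rw [hexp]
  have : (monomial ((bF + cF) + rest) (1:K)) = (monomial bF 1 * monomial cF 1) * monomial rest 1 := by
    rw [monomial_mul, monomial_mul, one_mul, one_mul, add_assoc]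
  rw [this]
  apply Ideal.mul_mem_right
  rw [pow_two]
  exact Ideal.mul_mem_mul (monomial_mem_dualIdeal hbCov) (monomial_mem_dualIdeal hcCov)

include h3 hmq hqn in
lemma keyB {r : MvPolynomial (Fin n) K}
    (hr : r * monomial (AF n q m) 1 ∈ (dualIdeal K (EE n q m hn))^2) :
    r ∈ Ideal.span (X '' ((SSet n q hqn : Set (Fin n)))) := by
  classical
  by_contra hcon
  rw [mem_ideal_span_X_image] at hcon
  push_neg at hcon
  obtain ⟨d, hd, hdS⟩ := hcon
  have hdS' : ∀ i : Fin n, i.val < q → d i = 0 := by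
    intro i hi
    have := hdS i (by rw [Finset.mem_coe, mem_SSet hqn]; exact hi)
    simpa using this
  have hmem : d + AF n q m ∈ (r * monomial (AF n q m) (1:K)).support := by
    rw [mem_support_iff, coeff_mul_monomial]
    simpa using (mem_support_iff.mp hd)
  obtain ⟨b, hb, c, hc, hle⟩ := (mem_dualIdeal_sq).mp hr _ hmem
  apply Bmain h3 hmq hqn hn (b := fun i => b i) (c := fun i => c i) (d := fun i => d i)
  · intro e he
    obtain ⟨j, hj, hjne⟩ := hb e he
    exact ⟨j, hj, hjne⟩
  · intro e he
    obtain ⟨j, hj, hjne⟩ := hc e he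
    exact ⟨j, hj, hjne⟩
  · exact hdS'
  · intro i
    have h2 := Finsupp.le_def.mp hle i
    simp only [Finsupp.add_apply] at h2
    rw [AF_apply] at h2
    omega

end Main

end St19


open St19 in
theorem stmt19 {K : Type*} [Field K] {n q m : ℕ} (hm : 3 ≤ m) (hq : m ≤ q) (hn : q ≤ n) :
    ∃ E : Finset (Finset (Fin n)), (∀ e ∈ E, e.card = m) ∧ HConnected E ∧
      ∃ S : Finset (Fin n), S.card = q ∧
        IsAssociatedPrime
          (Ideal.span (X '' (S : Set (Fin n))) : Ideal (MvPolynomial (Fin n) K))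
          (MvPolynomial (Fin n) K ⧸ ((dualIdeal K E) ^ 2)) := by
  classical
  have hn0 : 0 < n := by omega
  refine ⟨EE n q m hn0, card_EE hm hq hn hn0, ?_, SSet n q hn, card_SSet hn, ?_⟩
  · intro x y
    obtain ⟨l, h1, h2, h3⟩ := conn_main hm hq hn hn0 x y
    exact ⟨l, h1, h2, h3⟩
  · constructor
    · exact isPrime_span_X_image _
    · refine ⟨Submodule.Quotient.mk (monomial (AF n q m) (1:K)), ?_⟩
      suffices hI : (Ideal.span (X '' (SSet n q hn : Set (Fin n))) : Ideal (MvPolynomial (Fin n) K))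
          = (⊥ : Submodule (MvPolynomial (Fin n) K) (MvPolynomial (Fin n) K ⧸ ((dualIdeal K (EE n q m hn0)) ^ 2))).colon
            {Submodule.Quotient.mk (monomial (AF n q m) (1:K))} by
        rw [← hI, (isPrime_span_X_image _).radical]
      rw [Submodule.bot_colon']
      ext r
      rw [Submodule.mem_annihilator_span_singleton, ← Submodule.Quotient.mk_smul,
        Submodule.Quotient.mk_eq_zero, smul_eq_mul]
      constructor
      · intro hr
        refine Submodule.span_induction ?_ ?_ ?_ ?_ hr
        · rintro x ⟨i, hi, rfl⟩
          exact keyA hm hq hn hn0 (by rwa [Finset.mem_coe] at hi)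
        · rw [zero_mul]; exact zero_mem _
        · intro a b _ _ ha hb
          rw [add_mul]; exact add_mem ha hb
        · intro a x _ hx
          rw [smul_eq_mul, mul_assoc]
          exact Ideal.mul_mem_left _ _ hx
      · intro hr
        exact keyB hm hq hn hn0 hr
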